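/- In the Lorentz sequence space d(w,1) (with w = (w_j) positive, non-increasing, w_1 = 1, w_j → 0, ∑ w_j = ∞), if V is a bounded operator satisfying sup_n ‖e_n − V e_n‖ < 1/10 for the unit vector basis (e_n), then V is not weakly compact. Consequently d(w,1) fails the W.A.P. -/

import Mathlib

open Filter Topology

/-- A set is weakly compact if it is compact in the weak topology. -/
def IsWeaklyCompact {E : Type*} [NormedAddCommGroup E] [NormedSpace ℝ E] (D : Set E) : Prop :=
  IsCompact (toWeakSpace ℝ E '' D)

/-- An operator is weakly compact if the image of the closed unit ball is relatively
compact in the weak topology. -/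
def IsWeaklyCompactOp {E F : Type*} [NormedAddCommGroup E] [NormedSpace ℝ E]
    [NormedAddCommGroup F] [NormedSpace ℝ F] (V : E →L[ℝ] F) : Prop :=
  IsCompact (closure (toWeakSpace ℝ F '' (V '' Metric.closedBall 0 1)))

/-- `E` has the W.A.P. with constant `C`. -/
def HasWAPWith (E : Type*) [NormedAddCommGroup E] [NormedSpace ℝ E] (C : ℝ) : Prop :=
  ∀ D : Set E, IsWeaklyCompact D → ∀ ε : ℝ, 0 < ε →
    ∃ V : E →L[ℝ] E, IsWeaklyCompactOp V ∧ ‖V‖ ≤ C ∧ ∀ x ∈ D, ‖x - V x‖ < ε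

/-- The Lorentz norm `∑_j w_j a_j*` of a finitely supported sequence `a`, expressed as the
supremum of `∑_{i<k} w_i |a(σ(i))|` over injections `σ`. -/
noncomputable def lorentzNorm (w : ℕ → ℝ) (a : ℕ →₀ ℝ) : ℝ :=
  sSup {r : ℝ | ∃ (k : ℕ) (σ : ℕ → ℕ), Function.Injective σ ∧
    r = ∑ i ∈ Finset.range k, w i * |a (σ i)|}

section OTproof
open Finset
set_option linter.unusedSectionVars false
set_option linter.unusedVariables false
set_option linter.unreachableTactic false
set_option linter.unusedTactic false
set_option maxHeartbeats 2000000

namespace OT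

def LSet (w : ℕ → ℝ) (a : ℕ →₀ ℝ) : Set ℝ :=
  {r : ℝ | ∃ (k : ℕ) (σ : ℕ → ℕ), Function.Injective σ ∧
    r = ∑ i ∈ Finset.range k, w i * |a (σ i)|}

noncomputable def eps (i : ℕ) : ℝ := (1/100) * (1/4)^i

lemma eps_pos (i : ℕ) : 0 < eps i := mul_pos (by norm_num) (pow_pos (by norm_num) i)

noncomputable def Sw (w : ℕ → ℝ) (m : ℕ) : ℝ := ∑ i ∈ Finset.range m, w i

noncomputable def Tm {X : Type*} [NormedAddCommGroup X] [NormedSpace ℝ X] (e : ℕ → X) :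
    (ℕ →₀ ℝ) →ₗ[ℝ] X := Finsupp.linearCombination ℝ e

lemma geom_sum_le (s : Finset ℕ) : ∑ j ∈ s, ((1:ℝ)/2)^j ≤ 2 := by
  have hsub : s ⊆ Finset.range (s.sup id + 1) := by
    intro j hj
    exact Finset.mem_range.2 (Nat.lt_succ_of_le (Finset.le_sup (f := id) hj))
  calc ∑ j ∈ s, ((1:ℝ)/2)^j ≤ ∑ j ∈ Finset.range (s.sup id + 1), ((1:ℝ)/2)^j := by
        apply Finset.sum_le_sum_of_subset_of_nonneg hsub
        intro i _ _; positivity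
    _ ≤ 2 := sum_geometric_two_le _

lemma eps_max_le (p q : ℕ) (hpq : p ≠ q) : eps (max p q) ≤ (1/100) * ((1/2)^p * (1/2)^q) := by
  have h1 : ((1:ℝ)/4)^(max p q) = ((1:ℝ)/2)^(2 * max p q) := by
    rw [show ((1:ℝ)/4) = ((1:ℝ)/2)^2 by norm_num, ← pow_mul]
  have h2 : ((1:ℝ)/2)^(2 * max p q) ≤ ((1:ℝ)/2)^(p + q) := by
    apply pow_le_pow_of_le_one (by norm_num) (by norm_num)
    omega
  rw [eps, h1, ← pow_add]
  exact mul_le_mul_of_nonneg_left h2 (by norm_num)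

variable {w : ℕ → ℝ} (hw1 : w 0 = 1) (hwpos : ∀ j, 0 < w j) (hwmono : Antitone w)

include hw1 hwmono in
lemma w_le_one (i : ℕ) : w i ≤ 1 := hw1 ▸ hwmono (Nat.zero_le i)

include hw1 hwpos hwmono in
lemma mem_LSet_le {a : ℕ →₀ ℝ} {r : ℝ} (hr : r ∈ LSet w a) :
    r ≤ ∑ j ∈ a.support, |a j| := by
  obtain ⟨k, σ, hσ, rfl⟩ := hr
  have h1 : ∀ i ∈ Finset.range k, w i * |a (σ i)| ≤
      if a (σ i) ≠ 0 then |a (σ i)| else 0 := by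
    intro i _
    by_cases h : a (σ i) = 0
    · simp [h]
    · simp only [h, if_pos, ne_eq, not_false_iff, if_true]
      calc w i * |a (σ i)| ≤ 1 * |a (σ i)| := by
            apply mul_le_mul_of_nonneg_right (w_le_one hw1 hwmono i) (abs_nonneg _)
        _ = |a (σ i)| := one_mul _
  calc ∑ i ∈ Finset.range k, w i * |a (σ i)|
      ≤ ∑ i ∈ Finset.range k, if a (σ i) ≠ 0 then |a (σ i)| else 0 :=
        Finset.sum_le_sum h1
    _ = ∑ i ∈ (Finset.range k).filter (fun i => a (σ i) ≠ 0), |a (σ i)| := by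
        rw [Finset.sum_filter]
    _ = ∑ j ∈ ((Finset.range k).filter (fun i => a (σ i) ≠ 0)).image σ, |a j| := by
        rw [Finset.sum_image]
        intro x _ y _ h
        exact hσ h
    _ ≤ ∑ j ∈ a.support, |a j| := by
        apply Finset.sum_le_sum_of_subset_of_nonneg
        · intro j hj
          simp only [Finset.mem_image, Finset.mem_filter] at hj
          obtain ⟨i, ⟨_, hi⟩, rfl⟩ := hj
          exact Finsupp.mem_support_iff.2 hi
        · intro j _ _
          exact abs_nonneg _

lemma zero_mem_LSet (a : ℕ →₀ ℝ) : (0:ℝ) ∈ LSet w a :=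
  ⟨0, id, Function.injective_id, by simp⟩

include hw1 hwpos hwmono in
lemma bddAbove_LSet (a : ℕ →₀ ℝ) : BddAbove (LSet w a) :=
  ⟨∑ j ∈ a.support, |a j|, fun _ hr => mem_LSet_le hw1 hwpos hwmono hr⟩

include hw1 hwpos hwmono in
lemma le_lorentz {a : ℕ →₀ ℝ} {r : ℝ} (hr : r ∈ LSet w a) : r ≤ lorentzNorm w a :=
  le_csSup (bddAbove_LSet hw1 hwpos hwmono a) hr

include hw1 hwpos hwmono in
lemma lorentz_nonneg (a : ℕ →₀ ℝ) : 0 ≤ lorentzNorm w a :=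
  le_lorentz hw1 hwpos hwmono (zero_mem_LSet a)

lemma lorentz_le {a : ℕ →₀ ℝ} {M : ℝ} (h : ∀ r ∈ LSet w a, r ≤ M) :
    lorentzNorm w a ≤ M :=
  csSup_le ⟨0, zero_mem_LSet a⟩ h

include hwmono in
lemma sum_antitone_le (hwnn : ∀ j, 0 ≤ w j) (J : Finset ℕ) :
    ∑ i ∈ J, w i ≤ ∑ t ∈ Finset.range J.card, w t := by
  induction' hn : J.card with n ih generalizing J
  · rw [Finset.card_eq_zero] at hn; simp [hn]
  · have hne : J.Nonempty := Finset.card_pos.1 (by omega)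
    set M := J.max' hne with hM
    have hMmem : M ∈ J := J.max'_mem hne
    have hcard : (J.erase M).card = n := by
      rw [Finset.card_erase_of_mem hMmem, hn]
      omega
    have hsub : J ⊆ Finset.range (M + 1) := by
      intro x hx
      exact Finset.mem_range.2 (Nat.lt_succ_of_le (J.le_max' x hx))
    have hnM : n ≤ M := by
      have := Finset.card_le_card hsub
      rw [hn, Finset.card_range] at this
      omega
    calc ∑ i ∈ J, w i = w M + ∑ i ∈ J.erase M, w i := (Finset.add_sum_erase _ _ hMmem).symm
      _ ≤ w n + ∑ t ∈ Finset.range n, w t :=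
          add_le_add (hwmono hnM) (ih _ hcard)
      _ = ∑ t ∈ Finset.range (n+1), w t := by
          rw [Finset.sum_range_succ]; ring

variable {X : Type*} [NormedAddCommGroup X] [NormedSpace ℝ X] {e : ℕ → X}

lemma Tm_apply (e : ℕ → X) (a : ℕ →₀ ℝ) : Tm e a = a.sum fun j c => c • e j :=
  Finsupp.linearCombination_apply ℝ a

lemma EXT (hnorm : ∀ a : ℕ →₀ ℝ, ‖Tm e a‖ = lorentzNorm w a)
    (φ : (ℕ →₀ ℝ) →ₗ[ℝ] ℝ) (hφ : ∀ a, |φ a| ≤ lorentzNorm w a) :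
    ∃ Φ : X →L[ℝ] ℝ, (∀ a, Φ (Tm e a) = φ a) ∧ ∀ x, |Φ x| ≤ ‖x‖ := by
  have hker : LinearMap.ker (Tm e) ≤ LinearMap.ker φ := by
    intro a ha
    rw [LinearMap.mem_ker] at ha ⊢
    have h2 := hφ a
    rw [← hnorm a, ha, norm_zero] at h2
    exact abs_eq_zero.1 (le_antisymm h2 (abs_nonneg _))
  set q := (Tm e).quotKerEquivRange with hq
  let ψ0 : ((ℕ →₀ ℝ) ⧸ LinearMap.ker (Tm e)) →ₗ[ℝ] ℝ := (LinearMap.ker (Tm e)).liftQ φ hker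
  let ψ : LinearMap.range (Tm e) →ₗ[ℝ] ℝ := ψ0 ∘ₗ (q.symm : LinearMap.range (Tm e) →ₗ[ℝ] _)
  have hψval : ∀ (s : LinearMap.range (Tm e)) (a : ℕ →₀ ℝ), (s : X) = Tm e a → ψ s = φ a := by
    intro s a hs
    obtain ⟨b, hb⟩ := Submodule.Quotient.mk_surjective _ (q.symm s)
    have hqb : (s : X) = Tm e b := by
      have : q (q.symm s) = s := q.apply_symm_apply s
      rw [← hb] at this
      have := congrArg (Subtype.val) this
      rw [LinearMap.quotKerEquivRange_apply_mk] at this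
      exact this.symm
    have hba : Tm e (b - a) = 0 := by rw [map_sub, ← hqb, hs, sub_self]
    have hφba : φ b = φ a := by
      have := hker hba
      rw [LinearMap.mem_ker, map_sub, sub_eq_zero] at this
      exact this
    have : ψ s = ψ0 (q.symm s) := rfl
    rw [this, ← hb]
    show φ b = φ a
    exact hφba
  have hbound : ∀ s : LinearMap.range (Tm e), ‖ψ s‖ ≤ 1 * ‖s‖ := by
    intro s
    obtain ⟨b, hb⟩ := s.2
    rw [hψval s b hb.symm, one_mul]
    calc ‖φ b‖ ≤ lorentzNorm w b := hφ b
      _ = ‖Tm e b‖ := (hnorm b).symm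
      _ = ‖(s : X)‖ := by rw [hb]
      _ = ‖s‖ := rfl
  let ψc : LinearMap.range (Tm e) →L[ℝ] ℝ := ψ.mkContinuous 1 hbound
  obtain ⟨Φ, hΦ1, hΦ2⟩ := exists_extension_norm_eq (LinearMap.range (Tm e)) ψc
  refine ⟨Φ, fun a => ?_, fun x => ?_⟩
  · have := hΦ1 ⟨Tm e a, LinearMap.mem_range_self _ a⟩
    rw [this]
    show ψ _ = φ a
    exact hψval _ a rfl
  · calc |Φ x| ≤ ‖Φ‖ * ‖x‖ := Φ.le_opNorm x
      _ ≤ 1 * ‖x‖ := by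
          apply mul_le_mul_of_nonneg_right _ (norm_nonneg x)
          rw [hΦ2]
          exact ψ.mkContinuous_norm_le zero_le_one hbound
      _ = ‖x‖ := one_mul _

include hw1 hwpos hwmono in
lemma exists_E (hnorm : ∀ a : ℕ →₀ ℝ, ‖Tm e a‖ = lorentzNorm w a) :
    ∃ E : ℕ → (X →L[ℝ] ℝ), (∀ j a, E j (Tm e a) = a j) ∧ ∀ j x, |E j x| ≤ ‖x‖ := by
  have h : ∀ j : ℕ, ∃ Φ : X →L[ℝ] ℝ, (∀ a, Φ (Tm e a) = (Finsupp.lapply j : (ℕ →₀ ℝ) →ₗ[ℝ] ℝ) a)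
      ∧ ∀ x, |Φ x| ≤ ‖x‖ := by
    intro j
    apply EXT hnorm
    intro a
    apply le_lorentz hw1 hwpos hwmono
    refine ⟨1, fun i => j + i, fun x y h => by simpa using h, ?_⟩
    simp [Finsupp.lapply, hw1]
  choose E hE1 hE2 using h
  exact ⟨E, fun j a => hE1 j a, hE2⟩

include hwpos in
lemma Sw_tendsto (hwdiv : ¬ Summable w) : Tendsto (Sw w) atTop atTop :=
  (not_summable_iff_tendsto_nat_atTop_of_nonneg (fun j => (hwpos j).le)).1 hwdiv

include hw1 hwpos in
lemma Sw_one_le (m : ℕ) : 1 ≤ Sw w (m+1) := by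
  have : w 0 ≤ ∑ i ∈ Finset.range (m+1), w i :=
    Finset.single_le_sum (fun i _ => (hwpos i).le) (Finset.mem_range.2 (Nat.succ_pos m))
  rw [hw1] at this
  exact this

include hw1 hwpos hwmono in
/-- norm bound for a `±1/0`-coordinate vector supported on `K+1` points -/
lemma lorentz_flatlike {a : ℕ →₀ ℝ} {S : Finset ℕ} {t : ℝ} (ht : 0 ≤ t)
    (hbd : ∀ j, |a j| ≤ t) (hsupp : ∀ j, a j ≠ 0 → j ∈ S) :
    lorentzNorm w a ≤ t * Sw w S.card := by
  apply lorentz_le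
  rintro r ⟨k, σ, hσ, rfl⟩
  have h1 : ∀ i ∈ Finset.range k, w i * |a (σ i)| ≤ if a (σ i) ≠ 0 then t * w i else 0 := by
    intro i _
    by_cases h : a (σ i) = 0
    · simp [h]
    · simp only [h, ne_eq, not_false_iff, if_true]
      rw [mul_comm (t) (w i)]
      exact mul_le_mul_of_nonneg_left (hbd (σ i)) (hwpos i).le
  set J := (Finset.range k).filter (fun i => a (σ i) ≠ 0) with hJ
  have hcard : J.card ≤ S.card := by
    apply Finset.card_le_card_of_injOn σ
    · intro i hi
      rw [hJ, Finset.mem_coe, Finset.mem_filter] at hi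
      exact hsupp _ hi.2
    · intro i _ j _ h
      exact hσ h
  calc ∑ i ∈ Finset.range k, w i * |a (σ i)|
      ≤ ∑ i ∈ Finset.range k, if a (σ i) ≠ 0 then t * w i else 0 := Finset.sum_le_sum h1
    _ = ∑ i ∈ J, t * w i := by rw [hJ, Finset.sum_filter]
    _ = t * ∑ i ∈ J, w i := by rw [Finset.mul_sum]
    _ ≤ t * ∑ i ∈ Finset.range J.card, w i :=
        mul_le_mul_of_nonneg_left (sum_antitone_le hwmono (fun j => (hwpos j).le) J) ht
    _ ≤ t * ∑ i ∈ Finset.range S.card, w i := by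
        apply mul_le_mul_of_nonneg_left _ ht
        apply Finset.sum_le_sum_of_subset_of_nonneg
        · exact Finset.range_subset_range.2 hcard
        · intro i _ _; exact (hwpos i).le
    _ = t * Sw w S.card := rfl

include hw1 hwpos hwmono in
lemma weak_null (hw0 : Tendsto w atTop (𝓝 0))
    (hnorm : ∀ a : ℕ →₀ ℝ, ‖Tm e a‖ = lorentzNorm w a)
    (φ : X →L[ℝ] ℝ) : Tendsto (fun m => φ (e m)) atTop (𝓝 0) := by
  by_contra hcon
  rw [Metric.tendsto_atTop] at hcon
  push_neg at hcon
  obtain ⟨ε, hε, hfreq⟩ := hcon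
  have hfreq' : ∀ N, ∃ n > N, ε ≤ |φ (e n)| := by
    intro N
    obtain ⟨n, hn1, hn2⟩ := hfreq (N+1)
    rw [Real.dist_eq, sub_zero] at hn2
    exact ⟨n, by omega, hn2⟩
  obtain ⟨ν, hν, hνP⟩ := Filter.extraction_of_frequently_atTop (Filter.frequently_atTop'.2 hfreq')
  set sg : ℕ → ℝ := fun i => if φ (e (ν i)) < 0 then (-1 : ℝ) else 1 with hsg
  have hsgabs : ∀ i, |sg i| = 1 := by
    intro i
    rw [hsg]
    by_cases h : φ (e (ν i)) < 0 <;> simp [h]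
  have hsgmul : ∀ i, sg i * φ (e (ν i)) = |φ (e (ν i))| := by
    intro i
    rw [hsg]
    by_cases h : φ (e (ν i)) < 0
    · simp only [h, if_true]; rw [abs_of_neg h]; ring
    · simp only [h, if_false]; rw [abs_of_nonneg (not_lt.1 h)]; ring
  set aK : ℕ → (ℕ →₀ ℝ) := fun K => ∑ i ∈ Finset.range (K+1), Finsupp.single (ν i) (sg i)
    with haK
  have hcoord : ∀ K j, |aK K j| ≤ 1 ∧ (aK K j ≠ 0 → j ∈ (Finset.range (K+1)).image ν) := by
    intro K j
    have happ : aK K j = ∑ i ∈ (Finset.range (K+1)).filter (fun i => ν i = j), sg i := by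
      rw [haK]
      rw [Finsupp.finset_sum_apply]
      rw [Finset.sum_filter]
      apply Finset.sum_congr rfl
      intro i _
      rw [Finsupp.single_apply]
    have hc1 : ((Finset.range (K+1)).filter (fun i => ν i = j)).card ≤ 1 := by
      rw [Finset.card_le_one]
      intro a ha b hb
      rw [Finset.mem_filter] at ha hb
      exact hν.injective (ha.2.trans hb.2.symm)
    constructor
    · rw [happ]
      calc |∑ i ∈ (Finset.range (K+1)).filter (fun i => ν i = j), sg i|
          ≤ ∑ i ∈ (Finset.range (K+1)).filter (fun i => ν i = j), |sg i| :=
            Finset.abs_sum_le_sum_abs _ _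
        _ = ((Finset.range (K+1)).filter (fun i => ν i = j)).card • (1:ℝ) := by
            rw [← Finset.sum_const]
            apply Finset.sum_congr rfl
            intro i _; exact hsgabs i
        _ ≤ 1 := by
            rw [nsmul_eq_mul, mul_one]
            exact_mod_cast hc1
    · intro hne
      rw [happ] at hne
      have : ((Finset.range (K+1)).filter (fun i => ν i = j)).Nonempty := by
        by_contra hemp
        rw [Finset.not_nonempty_iff_eq_empty] at hemp
        rw [hemp] at hne
        simp at hne
      obtain ⟨i, hi⟩ := this
      rw [Finset.mem_filter] at hi
      exact Finset.mem_image.2 ⟨i, hi.1, hi.2⟩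
  have hnormK : ∀ K, ‖Tm e (aK K)‖ ≤ Sw w (K+1) := by
    intro K
    rw [hnorm]
    have := lorentz_flatlike hw1 hwpos hwmono (a := aK K) (S := (Finset.range (K+1)).image ν)
      (t := 1) zero_le_one (fun j => (hcoord K j).1) (fun j => (hcoord K j).2)
    apply le_trans this
    rw [one_mul]
    apply Finset.sum_le_sum_of_subset_of_nonneg
    · apply Finset.range_subset_range.2
      calc ((Finset.range (K+1)).image ν).card ≤ (Finset.range (K+1)).card :=
            Finset.card_image_le
        _ = K + 1 := Finset.card_range _
    · intro i _ _; exact (hwpos i).le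
  have hφK : ∀ K : ℕ, ((K:ℝ)+1) * ε ≤ φ (Tm e (aK K)) := by
    intro K
    have h1 : Tm e (aK K) = ∑ i ∈ Finset.range (K+1), sg i • e (ν i) := by
      rw [haK, map_sum]
      apply Finset.sum_congr rfl
      intro i _
      exact Finsupp.linearCombination_single ℝ (v := e) (sg i) (ν i)
    rw [h1, map_sum]
    have h2 : ∀ i ∈ Finset.range (K+1), ε ≤ φ (sg i • e (ν i)) := by
      intro i _
      rw [ContinuousLinearMap.map_smul, smul_eq_mul, hsgmul i]
      exact hνP i
    calc ((K:ℝ)+1) * ε = ∑ _i ∈ Finset.range (K+1), ε := by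
          rw [Finset.sum_const, Finset.card_range, nsmul_eq_mul]
          push_cast; ring
      _ ≤ ∑ i ∈ Finset.range (K+1), φ (sg i • e (ν i)) := Finset.sum_le_sum h2
  have hbound : ∀ K : ℕ, ε ≤ ‖φ‖ * ((((K+1) : ℕ) : ℝ)⁻¹ * Sw w (K+1)) := by
    intro K
    have h1 : ((K:ℝ)+1) * ε ≤ ‖φ‖ * Sw w (K+1) := by
      calc ((K:ℝ)+1) * ε ≤ φ (Tm e (aK K)) := hφK K
        _ ≤ |φ (Tm e (aK K))| := le_abs_self _
        _ ≤ ‖φ‖ * ‖Tm e (aK K)‖ := φ.le_opNorm _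
        _ ≤ ‖φ‖ * Sw w (K+1) := mul_le_mul_of_nonneg_left (hnormK K) (norm_nonneg φ)
    have hKpos : (0:ℝ) < ((K:ℝ)+1) := by positivity
    have : ε ≤ ‖φ‖ * Sw w (K+1) / ((K:ℝ)+1) := by
      rw [le_div_iff₀ hKpos]
      calc ε * ((K:ℝ)+1) = ((K:ℝ)+1) * ε := by ring
        _ ≤ ‖φ‖ * Sw w (K+1) := h1
    calc ε ≤ ‖φ‖ * Sw w (K+1) / ((K:ℝ)+1) := this
      _ = ‖φ‖ * ((((K+1) : ℕ) : ℝ)⁻¹ * Sw w (K+1)) := by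
          push_cast
          field_simp
  have hces : Tendsto (fun n : ℕ => ((n:ℝ))⁻¹ * ∑ i ∈ Finset.range n, w i) atTop (𝓝 0) :=
    Filter.Tendsto.cesaro hw0
  have hces2 : Tendsto (fun K : ℕ => ‖φ‖ * (((K+1:ℕ):ℝ)⁻¹ * Sw w (K+1))) atTop (𝓝 (‖φ‖ * 0)) := by
    apply Filter.Tendsto.const_mul
    have := hces.comp (tendsto_add_atTop_nat 1)
    exact this
  rw [mul_zero] at hces2
  have := ge_of_tendsto hces2 (Eventually.of_forall hbound)
  linarith
lemma coord_tendsto (hdense : DenseRange fun a : ℕ →₀ ℝ => Tm e a)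
    (E : ℕ → (X →L[ℝ] ℝ)) (hE1 : ∀ j a, E j (Tm e a) = a j) (hE2 : ∀ j x, |E j x| ≤ ‖x‖)
    (x : X) : Tendsto (fun q => E q x) atTop (𝓝 0) := by
  rw [Metric.tendsto_atTop]
  intro ε hε
  obtain ⟨a, ha⟩ := hdense.exists_dist_lt x (half_pos hε)
  refine ⟨(a.support.sup id) + 1, fun q hq => ?_⟩
  have haq : a q = 0 := by
    by_contra h
    have h1 : q ∈ a.support := Finsupp.mem_support_iff.2 h
    have h2 := Finset.le_sup (f := id) h1
    simp only [id] at h2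
    omega
  rw [Real.dist_eq, sub_zero]
  have : E q x = E q (x - Tm e a) + E q (Tm e a) := by rw [map_sub]; ring
  rw [this]
  calc |E q (x - Tm e a) + E q (Tm e a)| ≤ |E q (x - Tm e a)| + |E q (Tm e a)| := abs_add_le _ _
    _ ≤ ‖x - Tm e a‖ + |a q| := by
        apply add_le_add (hE2 q _)
        rw [hE1 q a]
    _ < ε/2 + ε/2 := by
        apply add_lt_add_of_lt_of_le
        · rw [← dist_eq_norm]; exact ha
        · rw [haq]; simp; linarith
    _ = ε := by ring

lemma construction
    (E : ℕ → (X →L[ℝ] ℝ)) (z : ℕ → X)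
    (hzw : ∀ j : ℕ, Tendsto (fun m => E j (z m)) atTop (𝓝 0))
    (hco : ∀ x : X, Tendsto (fun q => E q x) atTop (𝓝 0))
    (hdense : DenseRange fun a : ℕ →₀ ℝ => Tm e a) :
    ∃ (n : ℕ → ℕ) (b : ℕ → (ℕ →₀ ℝ)),
      StrictMono n ∧
      (∀ i, ‖Tm e (b i) - z (n i)‖ ≤ eps i) ∧
      (∀ j i, j < i → |E (n j) (z (n i))| ≤ eps i) ∧
      (∀ j i, j < i → |E (n i) (z (n j))| ≤ eps i) ∧
      (∀ j i, j < i → ∀ q ∈ (b j).support, q < n i) := by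
  have hstep : ∀ (i : ℕ) (p : ℕ → ℕ) (bb : ℕ → ℕ →₀ ℝ), ∃ mb : ℕ × (ℕ →₀ ℝ),
      (∀ j, j < i → p j < mb.1) ∧ (∀ j, j < i → ∀ q ∈ (bb j).support, q < mb.1) ∧
      (∀ j, j < i → |E (p j) (z mb.1)| ≤ eps i) ∧ (∀ j, j < i → |E mb.1 (z (p j))| ≤ eps i) ∧
      ‖Tm e mb.2 - z mb.1‖ ≤ eps i := by
    intro i p bb
    have h3 : ∀ j : ℕ, ∃ N, ∀ m ≥ N, |E (p j) (z m)| ≤ eps i := by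
      intro j
      have := (Metric.tendsto_atTop.1 (hzw (p j))) (eps i) (eps_pos i)
      obtain ⟨N, hN⟩ := this
      exact ⟨N, fun m hm => by
        have := hN m hm
        rw [Real.dist_eq, sub_zero] at this
        linarith⟩
    have h4 : ∀ j : ℕ, ∃ N, ∀ m ≥ N, |E m (z (p j))| ≤ eps i := by
      intro j
      have := (Metric.tendsto_atTop.1 (hco (z (p j)))) (eps i) (eps_pos i)
      obtain ⟨N, hN⟩ := this
      exact ⟨N, fun m hm => by
        have := hN m hm
        rw [Real.dist_eq, sub_zero] at this
        linarith⟩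
    choose N3 hN3 using h3
    choose N4 hN4 using h4
    set A := ((Finset.range i).sup p) + 1 with hA
    set B := ((Finset.range i).sup (fun j => (bb j).support.sup id)) + 1 with hB
    set C := (Finset.range i).sup N3 with hC
    set D := (Finset.range i).sup N4 with hD
    set m := max (max A B) (max C D) with hm
    obtain ⟨a, hadist⟩ := hdense.exists_dist_lt (z m) (eps_pos i)
    refine ⟨(m, a), ?_, ?_, ?_, ?_, ?_⟩
    · intro j hj
      have : p j ≤ (Finset.range i).sup p := Finset.le_sup (Finset.mem_range.2 hj)
      omega
    · intro j hj q hq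
      have h1 : id q ≤ (bb j).support.sup id := Finset.le_sup hq
      have h2 : (bb j).support.sup id ≤ (Finset.range i).sup (fun j => (bb j).support.sup id) :=
        Finset.le_sup (f := fun j => (bb j).support.sup id) (Finset.mem_range.2 hj)
      simp only [id] at h1
      omega
    · intro j hj
      apply hN3 j
      have : N3 j ≤ C := Finset.le_sup (Finset.mem_range.2 hj)
      omega
    · intro j hj
      apply hN4 j
      have : N4 j ≤ D := Finset.le_sup (Finset.mem_range.2 hj)
      omega
    · rw [← dist_eq_norm, dist_comm]
      exact hadist.le
  classical
  let G : ℕ → ((ℕ → ℕ) × (ℕ → (ℕ →₀ ℝ))) := fun i =>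
    Nat.rec ((fun _ => 0), (fun _ => 0))
      (fun i ih => (Function.update ih.1 i (hstep i ih.1 ih.2).choose.1,
                    Function.update ih.2 i (hstep i ih.1 ih.2).choose.2)) i
  have hG : ∀ i, G (i+1) = (Function.update (G i).1 i (hstep i (G i).1 (G i).2).choose.1,
                    Function.update (G i).2 i (hstep i (G i).1 (G i).2).choose.2) := fun i => rfl
  set n : ℕ → ℕ := fun i => (G (i+1)).1 i with hn
  set b : ℕ → (ℕ →₀ ℝ) := fun i => (G (i+1)).2 i with hb
  have hni : ∀ i, n i = (hstep i (G i).1 (G i).2).choose.1 := by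
    intro i
    rw [hn]
    simp only [hG i, Function.update_self]
  have hbi : ∀ i, b i = (hstep i (G i).1 (G i).2).choose.2 := by
    intro i
    rw [hb]
    simp only [hG i, Function.update_self]
  have hagree : ∀ i j, j < i → (G i).1 j = n j ∧ (G i).2 j = b j := by
    intro i
    induction i with
    | zero => intro j hj; omega
    | succ i IH =>
      intro j hj
      by_cases h : j = i
      · subst h
        exact ⟨rfl, rfl⟩
      · have hj' : j < i := by omega
        rw [hG i]
        simp only [Function.update_of_ne h]
        exact IH j hj'
  have hspec := fun i => (hstep i (G i).1 (G i).2).choose_spec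
  have hlt : ∀ j i, j < i → n j < n i := by
    intro j i hj
    have h1 := (hspec i).1 j hj
    rw [← hni i, (hagree i j hj).1] at h1
    exact h1
  refine ⟨n, b, fun a b hab => hlt a b hab, ?_, ?_, ?_, ?_⟩
  · intro i
    have := (hspec i).2.2.2.2
    rw [← hni i, ← hbi i] at this
    exact this
  · intro j i hj
    have := (hspec i).2.2.1 j hj
    rw [← hni i, (hagree i j hj).1] at this
    exact this
  · intro j i hj
    have := (hspec i).2.2.2.1 j hj
    rw [← hni i, (hagree i j hj).1] at this
    exact this
  · intro j i hj q hq
    have := (hspec i).2.1 j hj q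
    rw [← hni i, (hagree i j hj).2] at this
    exact this hq
lemma w_le_one' (i : ℕ) : w 0 = 1 → Antitone w → w i ≤ 1 := fun h1 hm => h1 ▸ hm (Nat.zero_le i)

include hw1 hwpos hwmono in
lemma lower_bound
    (hnorm : ∀ a : ℕ →₀ ℝ, ‖Tm e a‖ = lorentzNorm w a)
    (hdense : DenseRange fun a : ℕ →₀ ℝ => Tm e a)
    (E : ℕ → (X →L[ℝ] ℝ)) (hE1 : ∀ j a, E j (Tm e a) = a j) (hE2 : ∀ j x, |E j x| ≤ ‖x‖)
    (V : X →L[ℝ] X) (z : ℕ → X) (hVz : ∀ k, z k = V (e k) - e k) (hznorm : ∀ k, ‖z k‖ ≤ 1/10)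
    (n : ℕ → ℕ) (hnmono : StrictMono n)
    (hD : ∀ p q, p ≠ q → |E (n p) (z (n q))| ≤ eps (max p q)) :
    ∀ x ∈ Submodule.span ℝ (Set.range (fun k => e (n k))), (1/2) * ‖x‖ ≤ ‖V x‖ := by
  intro x hx
  obtain ⟨c, hc⟩ := Finsupp.mem_span_range_iff_exists_finsupp.1 hx
  set a : ℕ →₀ ℝ := c.embDomain ⟨n, hnmono.injective⟩ with ha
  have hTa : Tm e a = x := by
    rw [ha, Tm, Finsupp.linearCombination_embDomain]
    rw [← hc, Finsupp.linearCombination_apply]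
    rfl
  have hnormx : ‖x‖ = lorentzNorm w a := by rw [← hTa, hnorm]
  have hacoord : ∀ k', a (n k') = c k' := fun k' =>
    Finsupp.embDomain_apply_self ⟨n, hnmono.injective⟩ c k'
  have hasupp : ∀ j, a j ≠ 0 → ∃ k', n k' = j := by
    intro j hj
    have h1 : j ∈ a.support := Finsupp.mem_support_iff.2 hj
    rw [ha, Finsupp.support_embDomain] at h1
    obtain ⟨k', _, hk'⟩ := Finset.mem_map.1 h1
    exact ⟨k', hk'⟩
  have hcx : ∀ j, |c j| ≤ ‖x‖ := by
    intro j
    have : c j = E (n j) x := by rw [← hTa, hE1, hacoord]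
    rw [this]
    exact hE2 _ x
  -- key member estimate
  have hmem : ∀ r ∈ LSet w a, r ≤ ‖V x‖ + (14/100) * ‖x‖ := by
    rintro r ⟨k, σ, hσ, rfl⟩
    classical
    set I := (Finset.range k).filter (fun i => a (σ i) ≠ 0) with hI
    set sg : ℕ → ℝ := fun i => if a (σ i) < 0 then (-1:ℝ) else 1 with hsg
    have hsgabs : ∀ i, |sg i| = 1 := by
      intro i; rw [hsg]; by_cases h : a (σ i) < 0 <;> simp [h]
    have hsgmul : ∀ i, sg i * a (σ i) = |a (σ i)| := by
      intro i; rw [hsg]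
      by_cases h : a (σ i) < 0
      · simp only [h, if_true]; rw [abs_of_neg h]; ring
      · simp only [h, if_false]; rw [abs_of_nonneg (not_lt.1 h)]; ring
    set f : X →L[ℝ] ℝ := ∑ i ∈ I, (sg i * w i) • E (σ i) with hf
    have hfapp : ∀ y : X, f y = ∑ i ∈ I, (sg i * w i) * E (σ i) y := by
      intro y
      rw [hf]
      simp [ContinuousLinearMap.sum_apply, ContinuousLinearMap.smul_apply, smul_eq_mul]
    have hfT : ∀ bb : ℕ →₀ ℝ, f (Tm e bb) = ∑ i ∈ I, (sg i * w i) * bb (σ i) := by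
      intro bb
      rw [hfapp]
      apply Finset.sum_congr rfl
      intro i _
      rw [hE1]
    have hfnorm : ∀ v : X, |f v| ≤ ‖v‖ := by
      have hcl : IsClosed {v : X | |f v| ≤ ‖v‖} :=
        isClosed_le (f.continuous.abs) continuous_norm
    -- dense range argument
      have hrange : ∀ bb : ℕ →₀ ℝ, |f (Tm e bb)| ≤ ‖Tm e bb‖ := by
        intro bb
        rw [hfT, hnorm]
        apply le_trans (Finset.abs_sum_le_sum_abs _ _)
        have h1 : ∀ i ∈ I, |(sg i * w i) * bb (σ i)| = w i * |bb (σ i)| := by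
          intro i _
          rw [abs_mul, abs_mul, hsgabs, abs_of_pos (hwpos i), one_mul]
        rw [Finset.sum_congr rfl h1]
        calc ∑ i ∈ I, w i * |bb (σ i)| ≤ ∑ i ∈ Finset.range k, w i * |bb (σ i)| := by
              apply Finset.sum_le_sum_of_subset_of_nonneg
                (by rw [hI]; exact Finset.filter_subset _ _)
              intro i _ _; exact mul_nonneg (hwpos i).le (abs_nonneg _)
          _ ≤ lorentzNorm w bb := le_lorentz hw1 hwpos hwmono ⟨k, σ, hσ, rfl⟩
      intro v
      have hsub : Set.range (fun a : ℕ →₀ ℝ => Tm e a) ⊆ {v : X | |f v| ≤ ‖v‖} := by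
        rintro _ ⟨bb, rfl⟩
        exact hrange bb
      have := hdense.closure_range
      have h2 : closure (Set.range (fun a : ℕ →₀ ℝ => Tm e a)) ⊆ {v : X | |f v| ≤ ‖v‖} :=
        hcl.closure_subset_iff.2 hsub
      rw [this] at h2
      exact h2 (Set.mem_univ v)
    have hfx : f x = ∑ i ∈ Finset.range k, w i * |a (σ i)| := by
      rw [← hTa, hfT]
      have h1 : ∀ i ∈ I, (sg i * w i) * a (σ i) = w i * |a (σ i)| := by
        intro i _
        rw [mul_comm (sg i) (w i), mul_assoc, hsgmul]
      rw [Finset.sum_congr rfl h1, hI]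
      rw [Finset.sum_filter_of_ne]
      intro i _ h hzero
      rw [hzero] at h
      simp at h
    -- κ: index map
    have hrangeI : ∀ i, i ∈ I → ∃ k', n k' = σ i := by
      intro i hi
      rw [hI, Finset.mem_filter] at hi
      exact hasupp _ hi.2
    choose! κ hκ using hrangeI
    have hκinj : ∀ i ∈ I, ∀ i' ∈ I, κ i = κ i' → i = i' := by
      intro i hi i' hi' h
      apply hσ
      rw [← hκ i hi, ← hκ i' hi', h]
    -- bound on f (z (n j))
    have hfz : ∀ j : ℕ, |f (z (n j))| ≤ (1/10) * (∑ i ∈ I.filter (fun i => σ i = n j), w i)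
        + (2/100) * (1/2)^j := by
      intro j
      rw [hfapp]
      apply le_trans (Finset.abs_sum_le_sum_abs _ _)
      have hterm : ∀ i ∈ I, |(sg i * w i) * E (σ i) (z (n j))| = w i * |E (σ i) (z (n j))| := by
        intro i _
        rw [abs_mul, abs_mul, hsgabs, abs_of_pos (hwpos i), one_mul]
      rw [Finset.sum_congr rfl hterm]
      rw [← Finset.sum_filter_add_sum_filter_not I (fun i => σ i = n j)]
      have hdiag : ∑ i ∈ I.filter (fun i => σ i = n j), w i * |E (σ i) (z (n j))|
          ≤ (1/10) * (∑ i ∈ I.filter (fun i => σ i = n j), w i) := by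
        rw [Finset.mul_sum]
        apply Finset.sum_le_sum
        intro i hi
        rw [Finset.mem_filter] at hi
        rw [hi.2, mul_comm (1/10) (w i)]
        apply mul_le_mul_of_nonneg_left _ (hwpos i).le
        exact le_trans (hE2 _ _) (hznorm _)
      have hoff : ∑ i ∈ I.filter (fun i => ¬ σ i = n j), w i * |E (σ i) (z (n j))|
          ≤ (2/100) * (1/2)^j := by
        have hterm2 : ∀ i ∈ I.filter (fun i => ¬ σ i = n j),
            w i * |E (σ i) (z (n j))| ≤ (1/100) * (1/2)^j * (1/2)^(κ i) := by
          intro i hi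
          rw [Finset.mem_filter] at hi
          have hiI := hi.1
          have hκi : n (κ i) = σ i := hκ i hiI
          have hκj : κ i ≠ j := by
            intro h
            rw [h] at hκi
            exact hi.2 hκi.symm
          have h1 : |E (σ i) (z (n j))| ≤ eps (max (κ i) j) := by
            rw [← hκi]
            exact hD (κ i) j hκj
          have h2 : eps (max (κ i) j) ≤ (1/100) * ((1/2)^(κ i) * (1/2)^j) :=
            eps_max_le (κ i) j hκj
          calc w i * |E (σ i) (z (n j))| ≤ 1 * ((1/100) * ((1/2)^(κ i) * (1/2)^j)) := by
                apply mul_le_mul (w_le_one' i hw1 hwmono) (le_trans h1 h2) (abs_nonneg _)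
                norm_num
            _ = (1/100) * (1/2)^j * (1/2)^(κ i) := by ring
        apply le_trans (Finset.sum_le_sum hterm2)
        rw [← Finset.mul_sum]
        have h3 : ∑ i ∈ I.filter (fun i => ¬ σ i = n j), ((1:ℝ)/2)^(κ i) ≤ 2 := by
          rw [Finset.sum_filter]
          have h4 : ∑ i ∈ I, (if ¬ σ i = n j then ((1:ℝ)/2)^(κ i) else 0)
              ≤ ∑ i ∈ I, ((1:ℝ)/2)^(κ i) := by
            apply Finset.sum_le_sum
            intro i _
            by_cases h : σ i = n j <;> simp [h] <;> positivity
          apply le_trans h4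
          have h5 : ∑ i ∈ I, ((1:ℝ)/2)^(κ i) = ∑ k' ∈ I.image κ, ((1:ℝ)/2)^k' :=
            (Finset.sum_image (fun i hi i' hi' h => hκinj i hi i' hi' h)).symm
          rw [h5]
          exact geom_sum_le _
        calc (1/100) * (1/2)^j * ∑ i ∈ I.filter (fun i => ¬ σ i = n j), ((1:ℝ)/2)^(κ i)
            ≤ (1/100) * (1/2)^j * 2 := by
              apply mul_le_mul_of_nonneg_left h3 (by positivity)
          _ = (2/100) * (1/2)^j := by ring
      linarith
    -- V x - x
    have hVxx : V x - x = c.sum fun k' t => t • z (n k') := by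
      have h1 : x = c.sum fun k' t => t • e (n k') := hc.symm
      have h2 : V x = c.sum fun k' t => t • V (e (n k')) := by
        rw [h1, map_finsuppSum]
        apply Finsupp.sum_congr
        intro k' _
        rw [map_smul]
      rw [h2, h1]
      rw [← Finsupp.sum_sub]
      apply Finsupp.sum_congr
      intro k' _
      rw [hVz, smul_sub]
    have hfVxx : f (V x - x) = c.sum fun k' t => t * f (z (n k')) := by
      rw [hVxx, map_finsuppSum]
      apply Finsupp.sum_congr
      intro k' _
      rw [map_smul, smul_eq_mul]
    -- sum1
    have hsum1 : ∑ j ∈ c.support, |c j| * (∑ i ∈ I.filter (fun i => σ i = n j), w i) ≤ ‖x‖ := by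
      have hterm : ∀ j ∈ c.support,
          |c j| * (∑ i ∈ I.filter (fun i => σ i = n j), w i)
          = ∑ i ∈ I.filter (fun i => σ i = n j), w i * |a (σ i)| := by
        intro j _
        rw [Finset.mul_sum]
        apply Finset.sum_congr rfl
        intro i hi
        rw [Finset.mem_filter] at hi
        rw [hi.2, hacoord]
        ring
      rw [Finset.sum_congr rfl hterm]
      have hdisj : ∀ j1 ∈ (c.support : Set ℕ), ∀ j2 ∈ (c.support : Set ℕ), j1 ≠ j2 →
          Disjoint (I.filter (fun i => σ i = n j1)) (I.filter (fun i => σ i = n j2)) := by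
        intro j1 _ j2 _ hne
        rw [Finset.disjoint_left]
        intro i hi1 hi2
        rw [Finset.mem_filter] at hi1 hi2
        exact hne (hnmono.injective (hi1.2.symm.trans hi2.2))
      rw [← Finset.sum_biUnion hdisj]
      have hsubI : c.support.biUnion (fun j => I.filter (fun i => σ i = n j)) ⊆ Finset.range k := by
        intro i hi
        rw [Finset.mem_biUnion] at hi
        obtain ⟨j, _, hij⟩ := hi
        rw [Finset.mem_filter, hI, Finset.mem_filter] at hij
        exact hij.1.1
      calc ∑ i ∈ c.support.biUnion (fun j => I.filter (fun i => σ i = n j)), w i * |a (σ i)|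
          ≤ ∑ i ∈ Finset.range k, w i * |a (σ i)| := by
            apply Finset.sum_le_sum_of_subset_of_nonneg hsubI
            intro i _ _
            exact mul_nonneg (hwpos i).le (abs_nonneg _)
        _ ≤ lorentzNorm w a := le_lorentz hw1 hwpos hwmono ⟨k, σ, hσ, rfl⟩
        _ = ‖x‖ := hnormx.symm
    -- sum2
    have hsum2 : ∑ j ∈ c.support, |c j| * ((2/100) * (1/2)^j) ≤ (4/100) * ‖x‖ := by
      have h1 : ∀ j ∈ c.support, |c j| * ((2/100) * (1/2)^j) ≤ ‖x‖ * ((2/100) * (1/2)^j) := by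
        intro j _
        apply mul_le_mul_of_nonneg_right (hcx j) (by positivity)
      apply le_trans (Finset.sum_le_sum h1)
      have h2 : ∑ j ∈ c.support, ‖x‖ * ((2/100) * (1/2)^j)
          = ((2/100) * ‖x‖) * ∑ j ∈ c.support, ((1:ℝ)/2)^j := by
        rw [Finset.mul_sum]
        apply Finset.sum_congr rfl
        intro j _; ring
      rw [h2]
      calc ((2/100) * ‖x‖) * ∑ j ∈ c.support, ((1:ℝ)/2)^j
          ≤ ((2/100) * ‖x‖) * 2 := by
            apply mul_le_mul_of_nonneg_left (geom_sum_le _) (by positivity)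
        _ = (4/100) * ‖x‖ := by ring
    -- assemble
    have hmain : |f (V x - x)| ≤ (1/10) * ‖x‖ + (4/100) * ‖x‖ := by
      rw [hfVxx]
      have h1 : |c.sum fun k' t => t * f (z (n k'))|
          ≤ ∑ j ∈ c.support, |c j| * |f (z (n j))| := by
        rw [Finsupp.sum]
        apply le_trans (Finset.abs_sum_le_sum_abs _ _)
        apply Finset.sum_le_sum
        intro j _
        rw [abs_mul]
      apply le_trans h1
      have h2 : ∀ j ∈ c.support, |c j| * |f (z (n j))|
          ≤ |c j| * ((1/10) * (∑ i ∈ I.filter (fun i => σ i = n j), w i)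
            + (2/100) * (1/2)^j) := by
        intro j _
        exact mul_le_mul_of_nonneg_left (hfz j) (abs_nonneg _)
      apply le_trans (Finset.sum_le_sum h2)
      have h3 : ∑ j ∈ c.support, |c j| * ((1/10) * (∑ i ∈ I.filter (fun i => σ i = n j), w i)
            + (2/100) * (1/2)^j)
          = (1/10) * (∑ j ∈ c.support, |c j| * (∑ i ∈ I.filter (fun i => σ i = n j), w i))
            + ∑ j ∈ c.support, |c j| * ((2/100) * (1/2)^j) := by
        rw [Finset.mul_sum, ← Finset.sum_add_distrib]
        apply Finset.sum_congr rfl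
        intro j _; ring
      rw [h3]
      have := hsum1
      have := hsum2
      nlinarith [hsum1, hsum2]
    have hfVx : f (V x) ≤ ‖V x‖ := le_trans (le_abs_self _) (hfnorm (V x))
    have : (∑ i ∈ Finset.range k, w i * |a (σ i)|) = f (V x) - f (V x - x) := by
      rw [← hfx]; rw [map_sub]; ring
    rw [this]
    have habs : - f (V x - x) ≤ (1/10) * ‖x‖ + (4/100) * ‖x‖ := by
      have := neg_abs_le (f (V x - x))
      linarith [hmain]
    linarith
  have hfin : lorentzNorm w a ≤ ‖V x‖ + (14/100) * ‖x‖ := lorentz_le hmem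
  have hxnn : (0:ℝ) ≤ ‖x‖ := norm_nonneg x
  linarith [hnormx]
lemma w_le_one'' (i : ℕ) : w 0 = 1 → Antitone w → w i ≤ 1 := fun h1 hm => h1 ▸ hm (Nat.zero_le i)

include hw1 hwpos hwmono in
lemma g_package
    (hnorm : ∀ a : ℕ →₀ ℝ, ‖Tm e a‖ = lorentzNorm w a)
    (E : ℕ → (X →L[ℝ] ℝ)) (hE1 : ∀ j a, E j (Tm e a) = a j) (hE2 : ∀ j x, |E j x| ≤ ‖x‖)
    (V : X →L[ℝ] X) (z : ℕ → X) (hVz : ∀ k, z k = V (e k) - e k) (hznorm : ∀ k, ‖z k‖ ≤ 1/10)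
    (n : ℕ → ℕ) (hnmono : StrictMono n) (b : ℕ → (ℕ →₀ ℝ))
    (hP2 : ∀ i, ‖Tm e (b i) - z (n i)‖ ≤ eps i)
    (hD : ∀ p q, p ≠ q → |E (n p) (z (n q))| ≤ eps (max p q))
    (hP5 : ∀ j i, j < i → ∀ q ∈ (b j).support, q < n i)
    (hSw1 : ∀ m, 1 ≤ Sw w (m+1)) :
    ∃ (g : X →L[ℝ] ℝ) (u : ℕ → X),
      (∀ m, ‖u m‖ ≤ 1) ∧
      (∀ m, u m ∈ Submodule.span ℝ (Set.range (fun k => e (n k)))) ∧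
      (∀ m j, |E j (u m)| ≤ (Sw w (m+1))⁻¹) ∧
      (∀ m, 82/100 ≤ g (V (u m))) := by
  classical
  -- the weight sequence transported along n
  set cw : ℕ → ℝ := fun j => if h : ∃ k', n k' = j then w h.choose else 0 with hcw
  have hcw_nk : ∀ k', cw (n k') = w k' := by
    intro k'
    have h : ∃ k'', n k'' = n k' := ⟨k', rfl⟩
    rw [hcw]
    simp only [dif_pos h]
    congr 1
    exact hnmono.injective h.choose_spec
  have hcw_nonneg : ∀ j, 0 ≤ cw j := by
    intro j
    rw [hcw]
    by_cases h : ∃ k', n k' = j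
    · simp only [dif_pos h]; exact (hwpos _).le
    · simp only [dif_neg h]; exact le_refl 0
  have hcw_zero : ∀ j, (∀ k', n k' ≠ j) → cw j = 0 := by
    intro j hj
    rw [hcw]
    exact dif_neg (fun ⟨k', hk'⟩ => hj k' hk')
  set φg : (ℕ →₀ ℝ) →ₗ[ℝ] ℝ := Finsupp.linearCombination ℝ cw with hφg
  -- general bound for φg
  have phig_bound : ∀ (a : ℕ →₀ ℝ) (K0 : ℕ), (∀ k', n k' ∈ a.support → k' < K0) →
      |φg a| ≤ ∑ k' ∈ Finset.range K0, w k' * |a (n k')| := by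
    intro a K0 hK0
    have h1 : φg a = ∑ j ∈ a.support, a j * cw j := by
      rw [hφg, Finsupp.linearCombination_apply, Finsupp.sum]
      apply Finset.sum_congr rfl
      intro j _
      rw [smul_eq_mul]
    rw [h1]
    apply le_trans (Finset.abs_sum_le_sum_abs _ _)
    have h2 : ∀ j ∈ a.support, |a j * cw j| = |a j| * cw j := by
      intro j _
      rw [abs_mul, abs_of_nonneg (hcw_nonneg j)]
    rw [Finset.sum_congr rfl h2]
    have h3 : ∑ j ∈ a.support, |a j| * cw j
        = ∑ j ∈ a.support.filter (fun j => ∃ k', n k' = j), |a j| * cw j := by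
      rw [Finset.sum_filter_of_ne]
      intro j _ hne
      by_contra hno
      apply hne
      rw [hcw_zero j (fun k' hk' => hno ⟨k', hk'⟩), mul_zero]
    rw [h3]
    have h4 : ∑ j ∈ a.support.filter (fun j => ∃ k', n k' = j), |a j| * cw j
        = ∑ k' ∈ (Finset.range K0).filter (fun k' => n k' ∈ a.support), w k' * |a (n k')| := by
      apply Finset.sum_nbij' (i := fun j => if h : ∃ k', n k' = j then h.choose else 0)
        (j := fun k' => n k')
      · intro j hj
        rw [Finset.mem_filter] at hj
        obtain ⟨hj1, hj2⟩ := hj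
        simp only [dif_pos hj2]
        rw [Finset.mem_filter, Finset.mem_range]
        constructor
        · apply hK0
          rw [hj2.choose_spec]
          exact hj1
        · rw [hj2.choose_spec]
          exact hj1
      · intro k' hk'
        rw [Finset.mem_filter] at hk'
        rw [Finset.mem_filter]
        exact ⟨hk'.2, ⟨k', rfl⟩⟩
      · intro j hj
        rw [Finset.mem_filter] at hj
        simp only [dif_pos hj.2]
        exact hj.2.choose_spec
      · intro k' hk'
        have h : ∃ k'', n k'' = n k' := ⟨k', rfl⟩
        simp only [dif_pos h]
        exact hnmono.injective h.choose_spec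
      · intro j hj
        rw [Finset.mem_filter] at hj
        simp only [dif_pos hj.2]
        rw [hj.2.choose_spec]
        have : cw j = w (hj.2.choose) := by
          conv_lhs => rw [← hj.2.choose_spec]
          rw [hcw_nk]
        rw [this]
        ring
    rw [h4]
    apply Finset.sum_le_sum_of_subset_of_nonneg (Finset.filter_subset _ _)
    intro k' _ _
    exact mul_nonneg (hwpos k').le (abs_nonneg _)
  -- φg is bounded by the Lorentz norm
  have hφgb : ∀ a, |φg a| ≤ lorentzNorm w a := by
    intro a
    set K0 := (a.support.sup id) + 1 with hK0def
    have hK0 : ∀ k', n k' ∈ a.support → k' < K0 := by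
      intro k' hk'
      have h1 : n k' ≤ a.support.sup id := Finset.le_sup (f := id) hk'
      have h2 : k' ≤ n k' := hnmono.le_apply
      omega
    apply le_trans (phig_bound a K0 hK0)
    apply le_lorentz hw1 hwpos hwmono
    exact ⟨K0, n, hnmono.injective, rfl⟩
  obtain ⟨g, hg1, hg2⟩ := EXT hnorm φg hφgb
  -- flat vectors
  set am : ℕ → (ℕ →₀ ℝ) := fun m =>
    (Sw w (m+1))⁻¹ • ∑ k ∈ Finset.range (m+1), Finsupp.single (n k) 1 with ham
  set u : ℕ → X := fun m => Tm e (am m) with hu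
  have hSwpos : ∀ m, 0 < Sw w (m+1) := fun m => lt_of_lt_of_le one_pos (hSw1 m)
  have hamcoord : ∀ m j, |am m j| ≤ (Sw w (m+1))⁻¹ ∧
      (am m j ≠ 0 → j ∈ (Finset.range (m+1)).image n) := by
    intro m j
    have happ : am m j = (Sw w (m+1))⁻¹ *
        ∑ i ∈ (Finset.range (m+1)).filter (fun i => n i = j), (1:ℝ) := by
      rw [ham]
      rw [Finsupp.smul_apply, Finsupp.finset_sum_apply, smul_eq_mul]
      congr 1
      rw [Finset.sum_filter]
      apply Finset.sum_congr rfl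
      intro i _
      rw [Finsupp.single_apply]
    have hc1 : ((Finset.range (m+1)).filter (fun i => n i = j)).card ≤ 1 := by
      rw [Finset.card_le_one]
      intro p hp q hq
      rw [Finset.mem_filter] at hp hq
      exact hnmono.injective (hp.2.trans hq.2.symm)
    constructor
    · rw [happ, abs_mul, abs_of_nonneg (inv_nonneg.2 (hSwpos m).le)]
      have : |∑ i ∈ (Finset.range (m+1)).filter (fun i => n i = j), (1:ℝ)| ≤ 1 := by
        rw [Finset.sum_const, nsmul_eq_mul, mul_one]
        rw [abs_of_nonneg (by positivity)]
        exact_mod_cast hc1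
      calc (Sw w (m+1))⁻¹ * |∑ i ∈ (Finset.range (m+1)).filter (fun i => n i = j), (1:ℝ)|
          ≤ (Sw w (m+1))⁻¹ * 1 := mul_le_mul_of_nonneg_left this (inv_nonneg.2 (hSwpos m).le)
        _ = (Sw w (m+1))⁻¹ := mul_one _
    · intro hne
      rw [happ] at hne
      have : ((Finset.range (m+1)).filter (fun i => n i = j)).Nonempty := by
        by_contra hemp
        rw [Finset.not_nonempty_iff_eq_empty] at hemp
        rw [hemp] at hne
        simp at hne
      obtain ⟨i, hi⟩ := this
      rw [Finset.mem_filter] at hi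
      exact Finset.mem_image.2 ⟨i, hi.1, hi.2⟩
  have hunorm : ∀ m, ‖u m‖ ≤ 1 := by
    intro m
    rw [hu, hnorm]
    have := lorentz_flatlike hw1 hwpos hwmono (a := am m) (S := (Finset.range (m+1)).image n)
      (t := (Sw w (m+1))⁻¹) (inv_nonneg.2 (hSwpos m).le)
      (fun j => (hamcoord m j).1) (fun j => (hamcoord m j).2)
    apply le_trans this
    have hcard : ((Finset.range (m+1)).image n).card ≤ m + 1 :=
      le_trans Finset.card_image_le (by rw [Finset.card_range])
    have hmono : Sw w ((Finset.range (m+1)).image n).card ≤ Sw w (m+1) := by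
      apply Finset.sum_le_sum_of_subset_of_nonneg (Finset.range_subset_range.2 hcard)
      intro i _ _
      exact (hwpos i).le
    calc (Sw w (m+1))⁻¹ * Sw w ((Finset.range (m+1)).image n).card
        ≤ (Sw w (m+1))⁻¹ * Sw w (m+1) :=
          mul_le_mul_of_nonneg_left hmono (inv_nonneg.2 (hSwpos m).le)
      _ = 1 := inv_mul_cancel₀ (hSwpos m).ne'
  have hTam : ∀ m, u m = (Sw w (m+1))⁻¹ • ∑ k ∈ Finset.range (m+1), e (n k) := by
    intro m
    show Tm e ((Sw w (m+1))⁻¹ • ∑ k ∈ Finset.range (m+1), Finsupp.single (n k) 1)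
      = (Sw w (m+1))⁻¹ • ∑ k ∈ Finset.range (m+1), e (n k)
    rw [map_smul, map_sum]
    congr 1
    apply Finset.sum_congr rfl
    intro k _
    show Finsupp.linearCombination ℝ e (Finsupp.single (n k) 1) = e (n k)
    rw [Finsupp.linearCombination_single, one_smul]
  have huspan : ∀ m, u m ∈ Submodule.span ℝ (Set.range (fun k => e (n k))) := by
    intro m
    rw [hTam]
    apply Submodule.smul_mem
    apply Submodule.sum_mem
    intro k _
    apply Submodule.subset_span
    exact ⟨k, rfl⟩
  have hEu : ∀ m j, |E j (u m)| ≤ (Sw w (m+1))⁻¹ := by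
    intro m j
    rw [hu, hE1]
    exact (hamcoord m j).1
  -- the value g(u m) = 1
  have hgu : ∀ m, g (u m) = 1 := by
    intro m
    rw [hu, hg1, hφg, ham, map_smul, map_sum, smul_eq_mul]
    have : ∀ k ∈ Finset.range (m+1),
        Finsupp.linearCombination ℝ cw (Finsupp.single (n k) 1) = w k := by
      intro k _
      rw [Finsupp.linearCombination_single, one_smul, hcw_nk]
    rw [Finset.sum_congr rfl this]
    exact inv_mul_cancel₀ (hSwpos m).ne'
  -- bound for g (z (n j))
  have hgz : ∀ j, |g (z (n j))| ≤ w j * (1/10) + (4/100) * (1/2)^j := by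
    intro j
    have hsplit : g (z (n j)) = g (z (n j) - Tm e (b j)) + φg (b j) := by
      rw [← hg1, ← map_add]
      congr 1
      abel
    rw [hsplit]
    have h1 : |g (z (n j) - Tm e (b j))| ≤ eps j := by
      apply le_trans (hg2 _)
      rw [← neg_sub, norm_neg]
      exact hP2 j
    have hK0 : ∀ k', n k' ∈ (b j).support → k' < j + 1 := by
      intro k' hk'
      have := hP5 j (j+1) (Nat.lt_succ_self j) (n k') hk'
      exact hnmono.lt_iff_lt.1 this
    have h2 : |φg (b j)| ≤ ∑ k' ∈ Finset.range (j+1), w k' * |b j (n k')| :=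
      phig_bound (b j) (j+1) hK0
    have hcoordb : ∀ k', k' < j → |b j (n k')| ≤ 2 * eps j := by
      intro k' hk'
      have hb1 : |b j (n k') - E (n k') (z (n j))| ≤ eps j := by
        have : b j (n k') - E (n k') (z (n j)) = E (n k') (Tm e (b j) - z (n j)) := by
          rw [map_sub, hE1]
        rw [this]
        exact le_trans (hE2 _ _) (hP2 j)
      have hb2 : |E (n k') (z (n j))| ≤ eps j := by
        have := hD k' j (Nat.ne_of_lt hk')
        rwa [max_eq_right hk'.le] at this
      calc |b j (n k')| = |(b j (n k') - E (n k') (z (n j))) + E (n k') (z (n j))| := by ring_nf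
        _ ≤ |b j (n k') - E (n k') (z (n j))| + |E (n k') (z (n j))| := abs_add_le _ _
        _ ≤ eps j + eps j := add_le_add hb1 hb2
        _ = 2 * eps j := by ring
    have hcoordbj : |b j (n j)| ≤ eps j + 1/10 := by
      have hb1 : |b j (n j) - E (n j) (z (n j))| ≤ eps j := by
        have : b j (n j) - E (n j) (z (n j)) = E (n j) (Tm e (b j) - z (n j)) := by
          rw [map_sub, hE1]
        rw [this]
        exact le_trans (hE2 _ _) (hP2 j)
      have hb2 : |E (n j) (z (n j))| ≤ 1/10 := le_trans (hE2 _ _) (hznorm _)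
      calc |b j (n j)| = |(b j (n j) - E (n j) (z (n j))) + E (n j) (z (n j))| := by ring_nf
        _ ≤ |b j (n j) - E (n j) (z (n j))| + |E (n j) (z (n j))| := abs_add_le _ _
        _ ≤ eps j + 1/10 := add_le_add hb1 hb2
    have h3 : ∑ k' ∈ Finset.range (j+1), w k' * |b j (n k')|
        ≤ (∑ k' ∈ Finset.range j, w k' * (2 * eps j)) + w j * (eps j + 1/10) := by
      rw [Finset.sum_range_succ]
      apply add_le_add
      · apply Finset.sum_le_sum
        intro k' hk'
        exact mul_le_mul_of_nonneg_left (hcoordb k' (Finset.mem_range.1 hk')) (hwpos k').le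
      · exact mul_le_mul_of_nonneg_left hcoordbj (hwpos j).le
    have h4 : (∑ k' ∈ Finset.range j, w k' * (2 * eps j)) ≤ 2 * j * eps j := by
      have hterm : ∀ k' ∈ Finset.range j, w k' * (2 * eps j) ≤ 2 * eps j := by
        intro k' _
        calc w k' * (2 * eps j) ≤ 1 * (2 * eps j) := by
              apply mul_le_mul_of_nonneg_right (w_le_one'' k' hw1 hwmono)
              rw [eps]; positivity
          _ = 2 * eps j := one_mul _
      apply le_trans (Finset.sum_le_sum hterm)
      rw [Finset.sum_const, Finset.card_range, nsmul_eq_mul]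
      ring_nf
      exact le_refl _
    have hwje : w j * eps j ≤ eps j := by
      calc w j * eps j ≤ 1 * eps j := by
            apply mul_le_mul_of_nonneg_right (w_le_one'' j hw1 hwmono)
            rw [eps]; positivity
        _ = eps j := one_mul _
    have hjj : (2 * (j:ℝ) + 2) * eps j ≤ (4/100) * (1/2)^j := by
      have key : ∀ j : ℕ, (2*(j:ℝ)+2) * ((1:ℝ)/2)^j ≤ 4 := by
        intro j
        induction j with
        | zero => norm_num
        | succ p ih =>
          have hp : ((1:ℝ)/2)^p ≥ 0 := by positivity
          push_cast
          calc (2*((p:ℝ)+1)+2) * ((1:ℝ)/2)^(p+1)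
              = ((p:ℝ)+2) * ((1:ℝ)/2)^p := by push_cast; ring
            _ ≤ (2*(p:ℝ)+2) * ((1:ℝ)/2)^p := by
                apply mul_le_mul_of_nonneg_right _ hp
                have : (0:ℝ) ≤ p := Nat.cast_nonneg p
                linarith
            _ ≤ 4 := ih
      have h14 : ((1:ℝ)/4)^j = ((1:ℝ)/2)^j * ((1:ℝ)/2)^j := by
        rw [show ((1:ℝ)/4) = ((1:ℝ)/2) * ((1:ℝ)/2) by norm_num, mul_pow]
      rw [eps, h14]
      have hp : (0:ℝ) ≤ ((1:ℝ)/2)^j := by positivity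
      calc (2*(j:ℝ)+2) * ((1/100) * (((1:ℝ)/2)^j * ((1:ℝ)/2)^j))
          = (1/100) * (((2*(j:ℝ)+2) * ((1:ℝ)/2)^j) * ((1:ℝ)/2)^j) := by ring
        _ ≤ (1/100) * (4 * ((1:ℝ)/2)^j) := by
            apply mul_le_mul_of_nonneg_left _ (by norm_num)
            exact mul_le_mul_of_nonneg_right (key j) hp
        _ = (4/100) * ((1:ℝ)/2)^j := by ring
    calc |g (z (n j) - Tm e (b j)) + φg (b j)|
        ≤ |g (z (n j) - Tm e (b j))| + |φg (b j)| := abs_add_le _ _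
      _ ≤ eps j + ((2 * j * eps j) + (w j * eps j + w j * (1/10))) := by
          apply add_le_add h1
          apply le_trans h2
          apply le_trans h3
          have : w j * (eps j + 1/10) = w j * eps j + w j * (1/10) := by ring
          rw [this]
          linarith [h4]
      _ ≤ w j * (1/10) + (2 * (j:ℝ) + 2) * eps j := by linarith [hwje]
      _ ≤ w j * (1/10) + (4/100) * (1/2)^j := by linarith [hjj]
  -- V (u m)
  have hVu : ∀ m, V (u m) = u m + (Sw w (m+1))⁻¹ • ∑ k ∈ Finset.range (m+1), z (n k) := by
    intro m
    rw [hTam m, map_smul, map_sum]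
    rw [← smul_add]
    congr 1
    rw [← Finset.sum_add_distrib]
    apply Finset.sum_congr rfl
    intro k _
    rw [hVz]
    abel
  have hgVu : ∀ m, 82/100 ≤ g (V (u m)) := by
    intro m
    rw [hVu m, map_add, hgu m, map_smul, smul_eq_mul, map_sum]
    have habs : |∑ k ∈ Finset.range (m+1), g (z (n k))|
        ≤ (1/10) * Sw w (m+1) + 8/100 := by
      apply le_trans (Finset.abs_sum_le_sum_abs _ _)
      have h1 : ∀ k ∈ Finset.range (m+1), |g (z (n k))| ≤ w k * (1/10) + (4/100) * (1/2)^k :=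
        fun k _ => hgz k
      apply le_trans (Finset.sum_le_sum h1)
      rw [Finset.sum_add_distrib]
      apply add_le_add
      · rw [← Finset.sum_mul, mul_comm]
        exact le_refl _
      · rw [← Finset.mul_sum]
        calc (4/100) * ∑ k ∈ Finset.range (m+1), ((1:ℝ)/2)^k
            ≤ (4/100) * 2 := by
              apply mul_le_mul_of_nonneg_left (sum_geometric_two_le _) (by norm_num)
          _ = 8/100 := by norm_num
    have hSinv : (Sw w (m+1))⁻¹ ≤ 1 := by
      rw [inv_le_one_iff₀]
      right
      exact hSw1 m
    have hSinvpos : (0:ℝ) < (Sw w (m+1))⁻¹ := inv_pos.2 (hSwpos m)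
    have h2 : (Sw w (m+1))⁻¹ * ∑ k ∈ Finset.range (m+1), g (z (n k))
        ≥ -((Sw w (m+1))⁻¹ * ((1/10) * Sw w (m+1) + 8/100)) := by
      have := neg_abs_le (∑ k ∈ Finset.range (m+1), g (z (n k)))
      have h3 : (Sw w (m+1))⁻¹ * ∑ k ∈ Finset.range (m+1), g (z (n k))
          ≥ (Sw w (m+1))⁻¹ * (-((1/10) * Sw w (m+1) + 8/100)) := by
        apply mul_le_mul_of_nonneg_left _ hSinvpos.le
        linarith [habs]
      linarith [h3]
    have h4 : (Sw w (m+1))⁻¹ * ((1/10) * Sw w (m+1) + 8/100)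
        = 1/10 + (8/100) * (Sw w (m+1))⁻¹ := by
      rw [mul_add]
      congr 1
      · rw [mul_comm ((1:ℝ)/10) (Sw w (m+1)), ← mul_assoc,
          inv_mul_cancel₀ (hSwpos m).ne', one_mul]
      · ring
    have h5 : (8/100) * (Sw w (m+1))⁻¹ ≤ 8/100 := by
      calc (8/100) * (Sw w (m+1))⁻¹ ≤ (8/100) * 1 :=
            mul_le_mul_of_nonneg_left hSinv (by norm_num)
        _ = 8/100 := by norm_num
    have := h2
    rw [h4] at this
    linarith
  exact ⟨g, u, hunorm, huspan, hEu, hgVu⟩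
lemma w_le_one3 (i : ℕ) : w 0 = 1 → Antitone w → w i ≤ 1 := fun h1 hm => h1 ▸ hm (Nat.zero_le i)

include hw1 hwpos hwmono in
/-- separation: a vector with all coordinates zero is zero -/
lemma sep (hnorm : ∀ a : ℕ →₀ ℝ, ‖Tm e a‖ = lorentzNorm w a)
    (hdense : DenseRange fun a : ℕ →₀ ℝ => Tm e a)
    (E : ℕ → (X →L[ℝ] ℝ)) (hE1 : ∀ j a, E j (Tm e a) = a j) (hE2 : ∀ j x, |E j x| ≤ ‖x‖)
    (x : X) (hx : ∀ j, E j x = 0) : x = 0 := by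
  have key : ∀ θ : ℝ, 0 < θ → ‖x‖ ≤ 3 * θ := by
    intro θ hθ
    obtain ⟨a, ha⟩ := hdense.exists_dist_lt x hθ
    have hla : lorentzNorm w a ≤ 2 * θ := by
      apply lorentz_le
      rintro r ⟨k, σ, hσ, rfl⟩
      obtain ⟨a', ha'⟩ := hdense.exists_dist_lt x (div_pos hθ (by positivity : (0:ℝ) < k + 1))
      have hcoord' : ∀ j, |a' j| ≤ θ / (k+1) := by
        intro j
        have : a' j = E j (Tm e a') - E j x := by rw [hE1, hx, sub_zero]
        rw [this, ← map_sub]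
        apply le_trans (hE2 j _)
        rw [← dist_eq_norm, dist_comm]
        exact ha'.le
      have hterm : ∀ i ∈ Finset.range k, w i * |a (σ i)|
          ≤ w i * |(a - a') (σ i)| + θ / (k+1) := by
        intro i _
        have h1 : |a (σ i)| ≤ |(a - a') (σ i)| + |a' (σ i)| := by
          have : a (σ i) = (a - a') (σ i) + a' (σ i) := by
            rw [Finsupp.sub_apply]; ring
          rw [this]
          exact abs_add_le _ _
        calc w i * |a (σ i)| ≤ w i * (|(a - a') (σ i)| + |a' (σ i)|) :=
              mul_le_mul_of_nonneg_left h1 (hwpos i).le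
          _ = w i * |(a - a') (σ i)| + w i * |a' (σ i)| := by ring
          _ ≤ w i * |(a - a') (σ i)| + 1 * (θ / (k+1)) := by
              apply add_le_add (le_refl _)
              apply mul_le_mul (w_le_one3 i hw1 hwmono) (hcoord' (σ i)) (abs_nonneg _)
              norm_num
          _ = w i * |(a - a') (σ i)| + θ / (k+1) := by ring
      have hsum : ∑ i ∈ Finset.range k, w i * |a (σ i)|
          ≤ (∑ i ∈ Finset.range k, w i * |(a - a') (σ i)|) + k * (θ / (k+1)) := by
        apply le_trans (Finset.sum_le_sum hterm)
        rw [Finset.sum_add_distrib, Finset.sum_const, Finset.card_range, nsmul_eq_mul]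
      have h2 : ∑ i ∈ Finset.range k, w i * |(a - a') (σ i)| ≤ lorentzNorm w (a - a') :=
        le_lorentz hw1 hwpos hwmono ⟨k, σ, hσ, rfl⟩
      have h3 : lorentzNorm w (a - a') ≤ θ + θ / (k+1) := by
        rw [← hnorm, map_sub]
        calc ‖Tm e a - Tm e a'‖ ≤ ‖Tm e a - x‖ + ‖x - Tm e a'‖ := norm_sub_le_norm_sub_add_norm_sub _ _ _
          _ ≤ θ + θ / (k+1) := by
              apply add_le_add
              · rw [← dist_eq_norm, dist_comm]; exact ha.le
              · rw [← dist_eq_norm]; exact ha'.le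
      have h4 : (k : ℝ) * (θ / (k+1)) + θ / (k+1) = θ := by
        field_simp
      linarith
    calc ‖x‖ ≤ ‖x - Tm e a‖ + ‖Tm e a‖ := by
          have : x = (x - Tm e a) + Tm e a := by abel
          nth_rewrite 1 [this]
          exact norm_add_le _ _
      _ ≤ θ + 2 * θ := by
          apply add_le_add
          · rw [← dist_eq_norm]; exact ha.le
          · rw [hnorm]; exact hla
      _ = 3 * θ := by ring
  by_contra hne
  have hpos : 0 < ‖x‖ := norm_pos_iff.2 hne
  have := key (‖x‖/4) (by linarith)
  linarith

/-- evaluation of a functional is weakly continuous -/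
lemma eval_weak_cont (φ : X →L[ℝ] ℝ) :
    Continuous fun v : WeakSpace ℝ X => φ ((toWeakSpace ℝ X).symm v) :=
  WeakBilin.eval_continuous ((topDualPairing ℝ X).flip) φ

lemma pairing_flip_inj : Function.Injective ((topDualPairing ℝ X).flip) := by
  intro x y h
  have h2 : ∀ φ : X →L[ℝ] ℝ, φ x = φ y := fun φ => LinearMap.congr_fun h φ
  have h3 : ∀ φ : StrongDual ℝ X, φ (x - y) = 0 := by
    intro φ
    rw [map_sub, h2 φ, sub_self]
  have := NormedSpace.eq_zero_of_forall_dual_eq_zero ℝ h3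
  rwa [sub_eq_zero] at this

lemma weak_tendsto {f : ℕ → X} {x : X} {l : Filter ℕ}
    (h : ∀ φ : X →L[ℝ] ℝ, Tendsto (fun m => φ (f m)) l (𝓝 (φ x))) :
    Tendsto (fun m => toWeakSpace ℝ X (f m)) l (𝓝 (toWeakSpace ℝ X x)) := by
  refine (WeakBilin.tendsto_iff_forall_eval_tendsto _ pairing_flip_inj).2 ?_
  intro φ
  exact h φ

end OT

open OT in
/-- Example 6.12 of Odell–Tylli.  Let `w` be a positive non-increasing weight sequence
with `w_0 = 1`, `w_j → 0` and `∑ w_j = ∞`, and let `X` be the Lorentz sequence space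
`d(w,1)`: the Banach space generated by the unit vector basis `(e_n)` in which finitely
supported vectors `∑ a_j e_j` carry the Lorentz norm.  If `V` is a bounded operator on
`X` with `sup_n ‖e_n - V e_n‖ < 1/10`, then `V` is not weakly compact.  Consequently
`d(w,1)` fails the W.A.P. -/
theorem stmt_16 (w : ℕ → ℝ) (hw1 : w 0 = 1) (hwpos : ∀ j, 0 < w j) (hwmono : Antitone w)
    (hw0 : Filter.Tendsto w Filter.atTop (nhds 0)) (hwdiv : ¬ Summable w)
    {X : Type*} [NormedAddCommGroup X] [NormedSpace ℝ X] [CompleteSpace X]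
    (e : ℕ → X)
    (hnorm : ∀ a : ℕ →₀ ℝ, ‖a.sum fun j c => c • e j‖ = lorentzNorm w a)
    (hdense : DenseRange fun a : ℕ →₀ ℝ => a.sum fun j c => c • e j) :
    (∀ V : X →L[ℝ] X, (∀ n, ‖e n - V (e n)‖ < 1/10) → ¬ IsWeaklyCompactOp V) ∧
      ¬ ∃ C : ℝ, HasWAPWith X C := by
  classical
  have hTmeq : (fun a : ℕ →₀ ℝ => Tm e a) = (fun a : ℕ →₀ ℝ => a.sum fun j c => c • e j) := by
    funext a; exact Finsupp.linearCombination_apply ℝ a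
  have hnorm' : ∀ a : ℕ →₀ ℝ, ‖Tm e a‖ = lorentzNorm w a := by
    intro a
    rw [show Tm e a = a.sum fun j c => c • e j from Finsupp.linearCombination_apply ℝ a]
    exact hnorm a
  have hdense' : DenseRange fun a : ℕ →₀ ℝ => Tm e a := by rw [hTmeq]; exact hdense
  obtain ⟨E, hE1, hE2⟩ := exists_E hw1 hwpos hwmono hnorm'
  have hweaknull : ∀ φ : X →L[ℝ] ℝ, Tendsto (fun m => φ (e m)) atTop (𝓝 0) :=
    fun φ => weak_null hw1 hwpos hwmono hw0 hnorm' φ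
  have hco : ∀ x : X, Tendsto (fun q => E q x) atTop (𝓝 0) :=
    fun x => coord_tendsto hdense' E hE1 hE2 x
  have hSw1 : ∀ m, 1 ≤ Sw w (m+1) := Sw_one_le hw1 hwpos
  have hSwtop : Tendsto (Sw w) atTop atTop := Sw_tendsto hwpos hwdiv
  have part1 : ∀ V : X →L[ℝ] X, (∀ n, ‖e n - V (e n)‖ < 1/10) → ¬ IsWeaklyCompactOp V := by
    intro V hVe hWC
    set z : ℕ → X := fun k => V (e k) - e k with hz
    have hVz : ∀ k, z k = V (e k) - e k := fun k => rfl
    have hznorm : ∀ k, ‖z k‖ ≤ 1/10 := by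
      intro k
      rw [hVz k, ← norm_neg]
      simp only [neg_sub]
      exact (hVe k).le
    have hzw : ∀ j : ℕ, Tendsto (fun m => E j (z m)) atTop (𝓝 0) := by
      intro j
      have h1 : Tendsto (fun m => ((E j).comp V) (e m)) atTop (𝓝 0) := hweaknull _
      have h2 : Tendsto (fun m => E j (e m)) atTop (𝓝 0) := hweaknull _
      have h3 := h1.sub h2
      rw [sub_zero] at h3
      exact h3.congr (fun m => by
        rw [hVz m, map_sub]
        simp [ContinuousLinearMap.comp_apply])
    obtain ⟨n, b, hnmono, hP2, hP3, hP4, hP5⟩ := construction E z hzw hco hdense'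
    have hD : ∀ p q, p ≠ q → |E (n p) (z (n q))| ≤ eps (max p q) := by
      intro p q hpq
      rcases lt_or_gt_of_ne hpq with h | h
      · rw [max_eq_right h.le]
        exact hP3 p q h
      · rw [max_eq_left h.le]
        exact hP4 q p h
    have hlow := lower_bound hw1 hwpos hwmono hnorm' hdense' E hE1 hE2 V z hVz hznorm n hnmono hD
    set Ysub := (Submodule.span ℝ (Set.range (fun k => e (n k)))).topologicalClosure with hYsub
    have hlowc : ∀ x ∈ Ysub, (1/2) * ‖x‖ ≤ ‖V x‖ := by
      intro x hx
      have hcl : IsClosed {x : X | (1/2) * ‖x‖ ≤ ‖V x‖} :=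
        isClosed_le (continuous_const.mul continuous_norm) (V.continuous.norm)
      have hsubs : (Submodule.span ℝ (Set.range (fun k => e (n k))) : Set X)
          ⊆ {x : X | (1/2) * ‖x‖ ≤ ‖V x‖} := fun y hy => hlow y hy
      have h2 : (Ysub : Set X) ⊆ {x : X | (1/2) * ‖x‖ ≤ ‖V x‖} := by
        rw [hYsub, Submodule.topologicalClosure_coe]
        exact closure_minimal hsubs hcl
      exact h2 hx
    obtain ⟨g, u, hunorm, huspan, hEu, hgVu⟩ :=
      g_package hw1 hwpos hwmono hnorm' E hE1 hE2 V z hVz hznorm n hnmono b hP2 hD hP5 hSw1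
    have huY : ∀ m, u m ∈ Ysub := fun m =>
      (Submodule.le_topologicalClosure _) (huspan m)
    set Zsub : Submodule ℝ X := Ysub.map (V : X →ₗ[ℝ] X) with hZsub
    have hmemZ : ∀ x ∈ Ysub, V x ∈ Zsub := fun x hx => Submodule.mem_map_of_mem hx
    have hZmem : ∀ zz, zz ∈ Zsub → ∃ x ∈ Ysub, V x = zz := by
      intro zz hzz
      obtain ⟨x, hx, hVx⟩ := Submodule.mem_map.1 hzz
      exact ⟨x, hx, hVx⟩
    have hZcl : IsClosed (Zsub : Set X) := by
      apply IsSeqClosed.isClosed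
      intro q p hq hp
      have hxm : ∀ m, ∃ x ∈ Ysub, V x = q m := fun m => hZmem _ (hq m)
      choose xx hxY hxV using hxm
      have hcauchy : CauchySeq xx := by
        rw [Metric.cauchySeq_iff]
        intro ε hε
        have hqc : CauchySeq q := hp.cauchySeq
        rw [Metric.cauchySeq_iff] at hqc
        obtain ⟨N, hN⟩ := hqc (ε/4) (by linarith)
        refine ⟨N, fun m hm m' hm' => ?_⟩
        have hsub : xx m - xx m' ∈ Ysub := Submodule.sub_mem _ (hxY m) (hxY m')
        have hlow2 := hlowc _ hsub
        rw [map_sub, hxV, hxV] at hlow2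
        have hd : dist (q m) (q m') < ε/4 := hN m hm m' hm'
        rw [dist_eq_norm] at hd ⊢
        calc ‖xx m - xx m'‖ ≤ 2 * ‖q m - q m'‖ := by linarith
          _ < 2 * (ε/4) := by linarith
          _ < ε := by linarith
      obtain ⟨l, hl⟩ := cauchySeq_tendsto_of_complete hcauchy
      have hlY : l ∈ Ysub := by
        have hYcl : IsClosed (Ysub : Set X) := Submodule.isClosed_topologicalClosure _
        exact hYcl.mem_of_tendsto hl (Eventually.of_forall (fun m => hxY m))
      have hVconv : Tendsto (fun m => V (xx m)) atTop (𝓝 (V l)) :=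
        (V.continuous.tendsto l).comp hl
      have hVl : V l = p := by
        apply tendsto_nhds_unique _ hp
        exact hVconv.congr (fun m => hxV m)
      exact Submodule.mem_map.2 ⟨l, hlY, hVl⟩
    set VY : Ysub →ₗ[ℝ] Zsub := (V : X →ₗ[ℝ] X).restrict (fun x hx => hmemZ x hx) with hVY
    have hVYapp : ∀ x : Ysub, (VY x : X) = V (x : X) := fun x => rfl
    have hVYbij : Function.Bijective VY := by
      constructor
      · intro x y hxy
        have h1 : V ((x:X) - (y:X)) = 0 := by
          rw [map_sub]
          have h2 := congrArg (Subtype.val) hxy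
          rw [hVYapp, hVYapp] at h2
          rw [h2, sub_self]
        have h2 := hlowc ((x:X) - (y:X)) (Submodule.sub_mem _ x.2 y.2)
        rw [h1, norm_zero] at h2
        have h3 : ‖(x:X) - (y:X)‖ ≤ 0 := by linarith
        apply Subtype.ext
        have h4 := norm_le_zero_iff.1 h3
        rwa [sub_eq_zero] at h4
      · rintro ⟨zz, hzz⟩
        obtain ⟨x, hxY2, hVx⟩ := hZmem zz hzz
        exact ⟨⟨x, hxY2⟩, Subtype.ext (by rw [hVYapp]; exact hVx)⟩
    set eqv := LinearEquiv.ofBijective VY hVYbij with heqv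
    have heqvapp : ∀ x : Ysub, ((eqv x : Zsub) : X) = V (x : X) := fun x => rfl
    set 𝒰 : Ultrafilter ℕ := Ultrafilter.of atTop with h𝒰
    have hle : (𝒰 : Filter ℕ) ≤ atTop := Ultrafilter.of_le _
    set K := closure (toWeakSpace ℝ X '' (V '' Metric.closedBall 0 1)) with hK
    have hKc : IsCompact K := hWC
    have hmemK : ∀ m, toWeakSpace ℝ X (V (u m)) ∈ K := by
      intro m
      apply subset_closure
      apply Set.mem_image_of_mem
      apply Set.mem_image_of_mem
      rw [Metric.mem_closedBall, dist_zero_right]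
      exact hunorm m
    set sq : ℕ → WeakSpace ℝ X := fun m => toWeakSpace ℝ X (V (u m)) with hsq
    have h𝒱 : (Ultrafilter.map sq 𝒰 : Filter (WeakSpace ℝ X)) ≤ 𝓟 K := by
      rw [Filter.le_principal_iff, Ultrafilter.coe_map]
      exact Filter.mem_map.2 (Filter.univ_mem' (fun m => hmemK m))
    obtain ⟨y, hyK, hy⟩ := hKc.ultrafilter_le_nhds (Ultrafilter.map sq 𝒰) h𝒱
    set yv : X := (toWeakSpace ℝ X).symm y with hyv
    have hconv : ∀ φ : X →L[ℝ] ℝ, Tendsto (fun m => φ (V (u m))) 𝒰 (𝓝 (φ yv)) := by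
      intro φ
      have hc := (eval_weak_cont (X := X) φ).tendsto y
      have h2 : Tendsto sq 𝒰 (𝓝 y) := by
        rw [Filter.Tendsto, ← Ultrafilter.coe_map]
        exact hy
      have h3 := hc.comp h2
      have h4 : ((fun v : WeakSpace ℝ X => φ ((toWeakSpace ℝ X).symm v)) ∘ sq)
          = fun m => φ (V (u m)) := by
        funext m
        simp only [Function.comp_apply, hsq, LinearEquiv.symm_apply_apply]
      rw [h4] at h3
      exact h3
    have hyvZ : yv ∈ Zsub := by
      by_contra hno
      obtain ⟨f, u0, hfZ, hfy⟩ := geometric_hahn_banach_closed_point (Zsub.convex) hZcl hno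
      have hu0pos : 0 < u0 := by
        have := hfZ 0 (Submodule.zero_mem _)
        rwa [map_zero] at this
      have hf0 : ∀ a ∈ Zsub, f a ≤ 0 := by
        intro a haZ
        by_contra hpos
        push_neg at hpos
        set t := (u0 + 1) / f a with ht
        have := hfZ (t • a) (Submodule.smul_mem _ t haZ)
        rw [map_smul, smul_eq_mul, ht, div_mul_cancel₀] at this
        · linarith
        · exact ne_of_gt hpos
      have hfVu : ∀ m, f (V (u m)) ≤ 0 := fun m => hf0 _ (hmemZ _ (huY m))
      have hfy2 : f yv ≤ 0 := le_of_tendsto (hconv f) (Eventually.of_forall hfVu)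
      linarith
    set x₀ : Ysub := eqv.symm ⟨yv, hyvZ⟩ with hx₀
    have hVx₀ : V (x₀ : X) = yv := by
      have h1 := eqv.apply_symm_apply ⟨yv, hyvZ⟩
      have h2 := congrArg (Subtype.val) h1
      rw [heqvapp] at h2
      exact h2
    have hEx₀ : ∀ j, E j (x₀ : X) = 0 := by
      intro j
      set ψ : Zsub →ₗ[ℝ] ℝ :=
        (E j).toLinearMap ∘ₗ Ysub.subtype ∘ₗ (eqv.symm : Zsub →ₗ[ℝ] Ysub) with hψ
      have hψapp : ∀ s : Zsub, ψ s = E j ((eqv.symm s : Ysub) : X) := fun s => rfl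
      have hψb : ∀ s : Zsub, ‖ψ s‖ ≤ 2 * ‖s‖ := by
        intro s
        rw [hψapp]
        have hVs : V ((eqv.symm s : Ysub) : X) = (s : X) := by
          have h1 := eqv.apply_symm_apply s
          have h2 := congrArg (Subtype.val) h1
          rw [heqvapp] at h2
          exact h2
        have h1 := hlowc ((eqv.symm s : Ysub) : X) (eqv.symm s).2
        rw [hVs] at h1
        have h2 : |E j ((eqv.symm s : Ysub) : X)| ≤ ‖((eqv.symm s : Ysub) : X)‖ := hE2 _ _
        have h3 : ‖((eqv.symm s : Ysub) : X)‖ ≤ 2 * ‖(s : X)‖ := by linarith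
        calc ‖E j ((eqv.symm s : Ysub) : X)‖ = |E j ((eqv.symm s : Ysub) : X)| := rfl
          _ ≤ 2 * ‖(s : X)‖ := le_trans h2 h3
          _ = 2 * ‖s‖ := rfl
      set ψc : Zsub →L[ℝ] ℝ := ψ.mkContinuous 2 hψb with hψc
      obtain ⟨h, hh1, _⟩ := exists_extension_norm_eq Zsub ψc
      have hsymmu : ∀ m, eqv.symm ⟨V (u m), hmemZ _ (huY m)⟩ = ⟨u m, huY m⟩ := by
        intro m
        rw [LinearEquiv.symm_apply_eq]
        apply Subtype.ext
        rw [heqvapp]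
      have hhVu : ∀ m, h (V (u m)) = E j (u m) := by
        intro m
        have h2 := hh1 ⟨V (u m), hmemZ _ (huY m)⟩
        have h3 : h (V (u m)) = ψc ⟨V (u m), hmemZ _ (huY m)⟩ := h2
        rw [h3]
        show ψ _ = _
        rw [hψapp, hsymmu m]
      have hEulim : Tendsto (fun m => E j (u m)) atTop (𝓝 0) := by
        apply squeeze_zero_norm (fun m => hEu m j)
        exact (hSwtop.comp (tendsto_add_atTop_nat 1)).inv_tendsto_atTop
      have hlim1 : Tendsto (fun m => h (V (u m))) 𝒰 (𝓝 (h yv)) := hconv h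
      have hlim2 : Tendsto (fun m => h (V (u m))) 𝒰 (𝓝 0) := by
        have h5 := hEulim.mono_left hle
        exact h5.congr (fun m => (hhVu m).symm)
      have hh0 : h yv = 0 := tendsto_nhds_unique hlim1 hlim2
      have h6 : h yv = ψc ⟨yv, hyvZ⟩ := hh1 ⟨yv, hyvZ⟩
      have h7 : ψc ⟨yv, hyvZ⟩ = E j (x₀ : X) := by
        show ψ _ = _
        rw [hψapp, hx₀]
      rw [← h7, ← h6, hh0]
    have hx₀0 : (x₀ : X) = 0 := sep hw1 hwpos hwmono hnorm' hdense' E hE1 hE2 _ hEx₀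
    have hyv0 : yv = 0 := by rw [← hVx₀, hx₀0, map_zero]
    have hgyv : (82:ℝ)/100 ≤ g yv := ge_of_tendsto (hconv g) (Eventually.of_forall hgVu)
    rw [hyv0, map_zero] at hgyv
    linarith
  refine ⟨part1, ?_⟩
  rintro ⟨C, hC⟩
  have htend : Tendsto (fun m => toWeakSpace ℝ X (e m)) atTop (𝓝 (toWeakSpace ℝ X 0)) := by
    apply weak_tendsto
    intro φ
    rw [map_zero]
    exact hweaknull φ
  have hDc : IsWeaklyCompact (insert (0:X) (Set.range e)) := by
    unfold IsWeaklyCompact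
    have himg : toWeakSpace ℝ X '' (insert (0:X) (Set.range e))
        = insert (toWeakSpace ℝ X 0) (Set.range (fun m => toWeakSpace ℝ X (e m))) := by
      rw [Set.image_insert_eq]
      congr 1
      rw [← Set.range_comp]
      rfl
    rw [himg]
    exact htend.isCompact_insert_range
  obtain ⟨V, hVwc, _, hVap⟩ := hC _ hDc (1/10) (by norm_num)
  exact part1 V (fun m => hVap (e m) (Set.mem_insert_iff.2 (Or.inr ⟨m, rfl⟩))) hVwc

end OTproof
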